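/- Let 𝕂 ∈ {ℝ, ℂ} and let X be a nonzero separable Banach space over 𝕂. Then the set of all sequences (x_n)_{n∈ℕ} in X such that (a) the set {‖x_n‖ : n ∈ ℕ} is unbounded and (b) the set {x_n : n ∈ ℕ} is dense in X for the weak topology σ(X,X*), is 𝔠-lineable as a subset of the vector space X^ℕ. -/

import Mathlib

open Cardinal

universe u

/-- The weak topology `σ(X, X*)` on a normed space `X` over `𝕜`: the initial topology induced
by all continuous linear functionals on `X`. -/
noncomputable def weakTopology (𝕜 : Type) (X : Type u) [RCLike 𝕜]
    [NormedAddCommGroup X] [NormedSpace 𝕜 X] : TopologicalSpace X :=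
  ⨅ φ : X →L[𝕜] 𝕜, TopologicalSpace.induced φ inferInstance

/-- A norm-dense set is dense for the weak topology. -/
lemma dense_weak_of_dense {𝕜 : Type} [RCLike 𝕜] {X : Type u} [NormedAddCommGroup X]
    [NormedSpace 𝕜 X] {s : Set X} (hs : Dense s) : @Dense X (weakTopology 𝕜 X) s := by
  have hle : (inferInstance : TopologicalSpace X) ≤ weakTopology 𝕜 X :=
    le_iInf fun φ => continuous_iff_le_induced.mp φ.continuous
  rw [@dense_iff_inter_open X (weakTopology 𝕜 X) s]
  intro U hU hUne
  exact dense_iff_inter_open.mp hs U (TopologicalSpace.le_def.mp hle U hU) hUne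

theorem statement4 (𝕜 : Type) [RCLike 𝕜] (X : Type u)
    [NormedAddCommGroup X] [NormedSpace 𝕜 X] [CompleteSpace X] [Nontrivial X]
    [TopologicalSpace.SeparableSpace X] :
    ∃ W : Submodule 𝕜 (ℕ → X),
      Module.rank 𝕜 ↥W = Cardinal.lift.{u} Cardinal.continuum ∧
      ∀ x ∈ W, x ≠ 0 →
        (¬ ∃ C : ℝ, ∀ n : ℕ, ‖x n‖ ≤ C) ∧
        @Dense X (weakTopology 𝕜 X) (Set.range x) := by
  classical
  -- a dense sequence in X
  obtain ⟨D, hDc, hDd⟩ := TopologicalSpace.exists_countable_dense X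
  obtain ⟨d, hd⟩ := hDc.exists_eq_range hDd.nonempty
  have hddr : DenseRange d := by show Dense (Set.range d); exact hd ▸ hDd
  -- some term of `d` is nonzero
  obtain ⟨x₀, hx₀⟩ := exists_ne (0 : X)
  have hdj : ∃ j, d j ≠ 0 := by
    by_contra h
    push_neg at h
    have h1 : Dense ({0} : Set X) := hddr.mono (by rintro _ ⟨j, rfl⟩; simp [h j])
    have := h1 x₀
    rw [IsClosed.closure_eq isClosed_singleton] at this
    exact hx₀ this
  obtain ⟨j₀, hj₀⟩ := hdj
  -- a dense sequence in 𝕜 \ {0}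
  obtain ⟨S, hSc, hSd⟩ := TopologicalSpace.exists_countable_dense 𝕜
  have hSd' : Dense (S \ {0}) := hSd.diff_singleton 0
  obtain ⟨q, hq⟩ := (hSc.mono Set.diff_subset).exists_eq_range hSd'.nonempty
  have hq0 : ∀ i, q i ≠ 0 := fun i => by
    have : q i ∈ S \ {0} := hq ▸ Set.mem_range_self i
    exact this.2
  have hqdr : DenseRange q := by show Dense (Set.range q); exact hq ▸ hSd'
  -- the basic sequences
  set T : Type := ↥(Set.Ioi (1:ℝ)) with hT
  set u : ℕ → X := fun m => q m.unpair.1 • d m.unpair.2 with hu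
  set v : T → ℕ → X := fun t n => ((t.1 : 𝕜) ^ n.unpair.1) • u n.unpair.2 with hv
  have hum₀ : u (Nat.pair 0 j₀) ≠ 0 := by
    rw [hu]; simp only [Nat.unpair_pair]
    exact smul_ne_zero (hq0 0) hj₀
  -- the scalar coefficients of a linear combination
  set s : (T →₀ 𝕜) → ℕ → 𝕜 := fun c k => ∑ t ∈ c.support, c t * (t.1 : 𝕜) ^ k with hs
  have heval : ∀ (c : T →₀ 𝕜) (k m : ℕ),
      (c.sum fun t a => a • v t) (Nat.pair k m) = s c k • u m := by
    intro c k m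
    rw [Finsupp.sum, Finset.sum_apply, hs]
    rw [Finset.sum_smul]
    refine Finset.sum_congr rfl fun t _ => ?_
    simp [hv, Nat.unpair_pair, smul_smul]
  -- growth of the scalar coefficients
  have hgrow : ∀ (c : T →₀ 𝕜), c ≠ 0 →
      Filter.Tendsto (fun k => ‖s c k‖) Filter.atTop Filter.atTop := by
    intro c hc
    have hne : c.support.Nonempty := Finsupp.support_nonempty_iff.mpr hc
    set t₀ : T := c.support.max' hne with ht₀
    have ht₀mem : t₀ ∈ c.support := c.support.max'_mem hne
    have hct₀ : c t₀ ≠ 0 := Finsupp.mem_support_iff.mp ht₀mem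
    have ht₀pos : (0:ℝ) < t₀.1 := lt_trans one_pos t₀.2
    have hp0 : (t₀.1 : 𝕜) ≠ 0 := by
      simp only [ne_eq, RCLike.ofReal_eq_zero]; exact ne_of_gt ht₀pos
    -- the normalized sums tend to c t₀
    have hlim : Filter.Tendsto (fun k => s c k / (t₀.1 : 𝕜) ^ k)
        Filter.atTop (nhds (c t₀)) := by
      have hlim' : Filter.Tendsto
          (fun k => ∑ t ∈ c.support, c t * ((t.1 : 𝕜) / (t₀.1 : 𝕜)) ^ k)
          Filter.atTop (nhds (∑ t ∈ c.support, if t = t₀ then c t₀ else 0)) := by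
        refine tendsto_finset_sum _ fun t ht => ?_
        by_cases h : t = t₀
        · rw [if_pos h, h]
          have : ∀ k : ℕ, c t₀ * ((t₀.1 : 𝕜) / (t₀.1 : 𝕜)) ^ k = c t₀ := by
            intro k; rw [div_self hp0, one_pow, mul_one]
          exact Filter.Tendsto.congr (fun k => (this k).symm) tendsto_const_nhds
        · simp only [if_neg h]
          have htlt : t.1 < t₀.1 :=
            lt_of_le_of_ne (c.support.le_max' t ht) (fun he => h (Subtype.ext he))
          have hnorm : ‖(t.1 : 𝕜) / (t₀.1 : 𝕜)‖ < 1 := by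
            rw [norm_div, RCLike.norm_ofReal, RCLike.norm_ofReal,
              abs_of_pos (lt_trans one_pos t.2), abs_of_pos ht₀pos,
              div_lt_one ht₀pos]
            exact htlt
          have := tendsto_pow_atTop_nhds_zero_of_norm_lt_one hnorm
          simpa using this.const_mul (c t)
      rw [Finset.sum_ite_eq' c.support t₀ (fun _ => c t₀), if_pos ht₀mem] at hlim'
      refine hlim'.congr fun k => ?_
      rw [hs, Finset.sum_div]
      refine Finset.sum_congr rfl fun t _ => ?_
      rw [mul_div_assoc, div_pow]
    -- conclude
    have h1 : Filter.Tendsto (fun k => ‖s c k / (t₀.1 : 𝕜) ^ k‖)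
        Filter.atTop (nhds ‖c t₀‖) := hlim.norm
    have h2 : Filter.Tendsto (fun k : ℕ => t₀.1 ^ k) Filter.atTop Filter.atTop :=
      tendsto_pow_atTop_atTop_of_one_lt t₀.2
    have h3 := Filter.Tendsto.pos_mul_atTop (norm_pos_iff.mpr hct₀) h1 h2
    refine h3.congr fun k => ?_
    have : (t₀.1 : ℝ) ^ k = ‖(t₀.1 : 𝕜) ^ k‖ := by
      rw [norm_pow, RCLike.norm_ofReal, abs_of_pos ht₀pos]
    rw [this, ← norm_mul, div_mul_cancel₀ _ (pow_ne_zero k hp0)]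
  -- main properties of nonzero combinations
  have hmain : ∀ (c : T →₀ 𝕜), c ≠ 0 →
      (¬ ∃ C : ℝ, ∀ n : ℕ, ‖(c.sum fun t a => a • v t) n‖ ≤ C) ∧
      Dense (Set.range (c.sum fun t a => a • v t)) := by
    intro c hc
    set y := c.sum fun t a => a • v t with hy
    constructor
    · rintro ⟨C, hC⟩
      have htend : Filter.Tendsto (fun k => ‖s c k‖ * ‖u (Nat.pair 0 j₀)‖)
          Filter.atTop Filter.atTop :=
        (hgrow c hc).atTop_mul_const (norm_pos_iff.mpr hum₀)
      obtain ⟨k, hk⟩ := (htend.eventually_gt_atTop C).exists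
      have := hC (Nat.pair k (Nat.pair 0 j₀))
      rw [hy, heval c k (Nat.pair 0 j₀), norm_smul] at this
      exact absurd (lt_of_lt_of_le hk this) (lt_irrefl C)
    · have : DenseRange y := by
        rw [Metric.denseRange_iff]
        intro z ε hε
        obtain ⟨k, hk⟩ := ((hgrow c hc).eventually_gt_atTop 0).exists
        have hsk : s c k ≠ 0 := by
          intro h; rw [h, norm_zero] at hk; exact lt_irrefl 0 hk
        obtain ⟨j, hj⟩ := Metric.denseRange_iff.mp hddr z (ε/2) (by positivity)
        by_cases hdj0 : d j = 0
        · refine ⟨Nat.pair k (Nat.pair 0 j), ?_⟩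
          have : y (Nat.pair k (Nat.pair 0 j)) = 0 := by
            rw [hy, heval, hu]; simp [Nat.unpair_pair, hdj0]
          rw [this, ← hdj0]
          exact lt_trans hj (by linarith)
        · have hdjpos : (0:ℝ) < ‖d j‖ := norm_pos_iff.mpr hdj0
          have hskpos : (0:ℝ) < ‖s c k‖ := hk
          set δ := ε / (2 * ‖s c k‖ * ‖d j‖) with hδ
          have hδpos : 0 < δ := by positivity
          obtain ⟨i, hi⟩ := Metric.denseRange_iff.mp hqdr ((s c k)⁻¹) δ hδpos
          refine ⟨Nat.pair k (Nat.pair i j), ?_⟩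
          have hyval : y (Nat.pair k (Nat.pair i j)) = (s c k * q i) • d j := by
            rw [hy, heval, hu]; simp only [Nat.unpair_pair]; rw [smul_smul]
          have h5 : dist (d j) (y (Nat.pair k (Nat.pair i j))) < ε / 2 := by
            rw [hyval, dist_eq_norm]
            have : d j - (s c k * q i) • d j = (1 - s c k * q i) • d j := by
              rw [sub_smul, one_smul]
            rw [this, norm_smul]
            have h6 : ‖(1:𝕜) - s c k * q i‖ = ‖s c k‖ * dist ((s c k)⁻¹) (q i) := by
              rw [dist_eq_norm, ← norm_mul]
              congr 1
              rw [mul_sub, mul_inv_cancel₀ hsk]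
            rw [h6]
            calc ‖s c k‖ * dist ((s c k)⁻¹) (q i) * ‖d j‖
                < ‖s c k‖ * δ * ‖d j‖ := by
                  apply mul_lt_mul_of_pos_right _ hdjpos
                  exact mul_lt_mul_of_pos_left hi hskpos
              _ = ε / 2 := by
                  rw [hδ]; field_simp
          calc dist z (y (Nat.pair k (Nat.pair i j)))
              ≤ dist z (d j) + dist (d j) (y (Nat.pair k (Nat.pair i j))) := dist_triangle _ _ _
            _ < ε / 2 + ε / 2 := add_lt_add hj h5
            _ = ε := by ring
      exact this
  -- linear independence
  have hli : LinearIndependent 𝕜 v := by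
    rw [linearIndependent_iff]
    intro l hl
    by_contra hl0
    obtain ⟨k, hk⟩ := ((hgrow l hl0).eventually_gt_atTop 0).exists
    have hsk : s l k ≠ 0 := by
      intro h; rw [h, norm_zero] at hk; exact lt_irrefl 0 hk
    have h1 : Finsupp.linearCombination 𝕜 v l = l.sum fun t a => a • v t :=
      Finsupp.linearCombination_apply 𝕜 l
    have h2 := congrFun (h1 ▸ hl) (Nat.pair k (Nat.pair 0 j₀))
    rw [heval] at h2
    exact smul_ne_zero hsk hum₀ h2
  -- assembling
  refine ⟨Submodule.span 𝕜 (Set.range v), ?_, ?_⟩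
  · rw [rank_span hli]
    have h1 : Cardinal.lift.{u, 0} (Cardinal.mk T) = Cardinal.lift.{u} Cardinal.continuum := by
      rw [show Cardinal.mk T = Cardinal.mk (Set.Ioi (1:ℝ)) from rfl, Cardinal.mk_Ioi_real,
        Cardinal.lift_continuum, Cardinal.lift_continuum]
    have h2 : Cardinal.lift.{0} (Cardinal.mk (Set.range v)) = Cardinal.lift.{u} (Cardinal.mk T) :=
      Cardinal.mk_range_eq_of_injective hli.injective
    rw [Cardinal.lift_uzero] at h2
    rw [h2, h1]
  · intro x hx hx0
    obtain ⟨c, hc⟩ := Finsupp.mem_span_range_iff_exists_finsupp.mp hx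
    have hc0 : c ≠ 0 := by
      intro h; apply hx0; rw [← hc, h]; simp
    obtain ⟨h1, h2⟩ := hmain c hc0
    rw [hc] at h1 h2
    exact ⟨h1, dense_weak_of_dense h2⟩
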